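/- Fix β ∈ (1,2), a threshold sequence u = (u_n)_{n≥1} with each u_n ∈ [1,(β−1)⁻¹], and ε ∈ (0,1). For each integer m ≥ 1 set k̄(m) = ⌈(1+ε)·m·log 2/log β⌉. Then for Lebesgue-almost every x ∈ [0,1] there exists M ∈ ℕ such that for all m ≥ M one has I_{k̄(m)}(u,x) ⊆ D_m(x); in particular k(m,u,x) ≤ k̄(m) for all m ≥ M. -/

import Mathlib

open MeasureTheory Filter Set Real

/-- Orbit of the β-encoder: `betaIter β u x n` is the iterate `x_n`, where
`x_0 = x` and `x_n = T_{u_n}(x_{n-1})`. -/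
noncomputable def betaIter (β : ℝ) (u : ℕ → ℝ) (x : ℝ) : ℕ → ℝ
  | 0 => x
  | n + 1 =>
      if β * betaIter β u x n < u (n + 1) then β * betaIter β u x n
      else β * betaIter β u x n - 1

/-- The bit `b_n` produced by the β-encoder at step `n ≥ 1`. -/
noncomputable def betaBit (β : ℝ) (u : ℕ → ℝ) (x : ℝ) (n : ℕ) : ℝ :=
  if β * betaIter β u x (n - 1) < u n then 0 else 1

/-- The interval `I_k(u,x)` determined by the first `k` output bits. -/
noncomputable def betaI (β : ℝ) (u : ℕ → ℝ) (x : ℝ) (k : ℕ) : Set ℝ :=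
  Set.Icc (∑ n ∈ Finset.Icc 1 k, betaBit β u x n / β ^ n)
    ((∑ n ∈ Finset.Icc 1 k, betaBit β u x n / β ^ n) + (β ^ k)⁻¹ * (β - 1)⁻¹)

/-- The dyadic interval of order `m` containing `x`: `[j/2^m, (j+1)/2^m)`,
the last one (containing 1) being `[1 - 2^{-m}, 1]`. -/
noncomputable def dyadic (m : ℕ) (x : ℝ) : Set ℝ :=
  if 1 - ((2:ℝ) ^ m)⁻¹ ≤ x then Set.Icc (1 - ((2:ℝ) ^ m)⁻¹) 1
  else Set.Ico ((⌊x * 2 ^ m⌋ : ℝ) / 2 ^ m) (((⌊x * 2 ^ m⌋ : ℝ) + 1) / 2 ^ m)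

/-- `k(m, u, x) = inf { k ≥ 1 : I_k(u,x) ⊆ D_m(x) } ∈ ℕ ∪ {∞}`. -/
noncomputable def kval (β : ℝ) (u : ℕ → ℝ) (x : ℝ) (m : ℕ) : ℕ∞ :=
  sInf {e : ℕ∞ | ∃ k : ℕ, e = (k : ℕ∞) ∧ 1 ≤ k ∧ betaI β u x k ⊆ dyadic m x}

/-- The iterates stay in `[0, (β-1)⁻¹]`. -/
lemma betaIter_mem (β : ℝ) (hβ1 : 1 < β) (u : ℕ → ℝ)
    (hu : ∀ n, 1 ≤ n → u n ∈ Set.Icc (1:ℝ) (β - 1)⁻¹)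
    (x : ℝ) (hx : x ∈ Set.Icc (0:ℝ) (β - 1)⁻¹) :
    ∀ n, betaIter β u x n ∈ Set.Icc (0:ℝ) (β - 1)⁻¹ := by
  intro n
  induction n with
  | zero => exact hx
  | succ n ih =>
    have hb : (0:ℝ) < β - 1 := by linarith
    obtain ⟨h0, h1⟩ := ih
    obtain ⟨hu1, hu2⟩ := hu (n+1) (Nat.le_add_left 1 n)
    have key : β * (β - 1)⁻¹ - 1 = (β - 1)⁻¹ := by field_simp; ring
    simp only [betaIter]
    split_ifs with h
    · exact ⟨by nlinarith, by linarith⟩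
    · exact ⟨by linarith,
        by nlinarith [mul_le_mul_of_nonneg_left h1 (by linarith : (0:ℝ) ≤ β)]⟩

/-- Telescoping identity for the partial sums of the bit expansion. -/
lemma betaSum_eq (β : ℝ) (hβ0 : 0 < β) (u : ℕ → ℝ) (x : ℝ) :
    ∀ k : ℕ, ∑ n ∈ Finset.Icc 1 k, betaBit β u x n / β ^ n
      = x - betaIter β u x k / β ^ k := by
  intro k
  induction k with
  | zero => simp [betaIter]
  | succ k ih =>
    rw [Finset.sum_Icc_succ_top (Nat.le_add_left 1 k), ih]
    have hstep : betaIter β u x (k+1) = β * betaIter β u x k - betaBit β u x (k+1) := by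
      simp only [betaIter, betaBit, Nat.add_sub_cancel]
      split_ifs with h <;> ring
    have hβk : (β:ℝ) ^ k ≠ 0 := by positivity
    have hβk1 : (β:ℝ) ^ (k+1) ≠ 0 := by positivity
    rw [hstep]
    field_simp
    ring

/-- If `x` avoids the `r`-neighbourhoods of all dyadic grid points of order `m`,
then the whole interval `[x-r, x+r]` is inside the dyadic interval of `x`. -/
lemma icc_subset_dyadic (m : ℕ) (x r : ℝ) (hr : 0 < r) (hx0 : 0 ≤ x) (hx1 : x ≤ 1)
    (hbad : ∀ j ∈ Finset.range (2^m+1),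
      x ∉ Set.Icc ((j:ℝ)/2^m - r) ((j:ℝ)/2^m + r)) :
    Set.Icc (x - r) (x + r) ⊆ dyadic m x := by
  have hT : (0:ℝ) < 2 ^ m := by positivity
  have hlast := hbad (2^m) (by simp)
  rw [Set.mem_Icc, not_and_or, not_le, not_le] at hlast
  have hcast : ((2^m : ℕ):ℝ) / 2^m = 1 := by
    push_cast; field_simp
  rw [hcast] at hlast
  have hxlt : x < 1 - r := by rcases hlast with h | h; linarith; linarith
  set j₀ : ℤ := ⌊x * 2^m⌋ with hj₀
  have hj0l : (j₀:ℝ) ≤ x * 2^m := Int.floor_le _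
  have hj0u : x * 2^m < (j₀:ℝ) + 1 := Int.lt_floor_add_one _
  have hj0nn : 0 ≤ j₀ := Int.le_floor.2 (by push_cast; positivity)
  have htn : ((j₀.toNat:ℕ):ℝ) = (j₀:ℝ) := by exact_mod_cast Int.toNat_of_nonneg hj0nn
  have htn1 : (((j₀+1).toNat:ℕ):ℝ) = (j₀:ℝ) + 1 := by
    have : ((j₀+1).toNat : ℤ) = j₀ + 1 := Int.toNat_of_nonneg (by omega)
    exact_mod_cast this
  have hpow : ((2:ℤ))^m = ((2^m : ℕ) : ℤ) := by push_cast; ring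
  have hton : (j₀.toNat : ℤ) = j₀ := Int.toNat_of_nonneg hj0nn
  have hton1 : ((j₀+1).toNat : ℤ) = j₀ + 1 := Int.toNat_of_nonneg (by omega)
  have hj0lt : j₀ < 2^m := by
    apply Int.floor_lt.2
    push_cast
    nlinarith
  have hA : (j₀:ℝ)/2^m + r < x := by
    have hmem : j₀.toNat ∈ Finset.range (2^m+1) := by
      simp only [Finset.mem_range]
      omega
    have := hbad j₀.toNat hmem
    rw [Set.mem_Icc, not_and_or, not_le, not_le] at this
    rw [htn] at this
    rcases this with h | h
    · exfalso
      have : (j₀:ℝ)/2^m ≤ x := by rw [div_le_iff₀ hT]; linarith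
      linarith
    · linarith
  have hB : x + r < ((j₀:ℝ)+1)/2^m := by
    have hmem : (j₀+1).toNat ∈ Finset.range (2^m+1) := by
      simp only [Finset.mem_range]
      omega
    have := hbad (j₀+1).toNat hmem
    rw [Set.mem_Icc, not_and_or, not_le, not_le] at this
    rw [htn1] at this
    rcases this with h | h
    · linarith
    · exfalso
      have : x ≤ ((j₀:ℝ)+1)/2^m := by rw [le_div_iff₀ hT]; linarith
      linarith
  unfold dyadic
  split_ifs with h
  · intro y hy
    rw [Set.mem_Icc] at hy ⊢
    have hjge : (1 - ((2:ℝ)^m)⁻¹) ≤ (j₀:ℝ)/2^m := by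
      have : ((2:ℝ)^m - 1) ≤ (j₀:ℝ) := by
        have e : (1 - ((2:ℝ)^m)⁻¹) * 2^m = 2^m - 1 := by field_simp
        have : (2^m - 1 : ℤ) ≤ j₀ := Int.le_floor.2 (by
          push_cast
          nlinarith [mul_le_mul_of_nonneg_right h hT.le])
        exact_mod_cast this
      rw [le_div_iff₀ hT]
      have h2 : (1 - ((2:ℝ)^m)⁻¹) * 2^m = 2^m - 1 := by field_simp
      linarith [h2]
    have hjle : ((j₀:ℝ)+1)/2^m ≤ 1 := by
      rw [div_le_one hT]
      have : (j₀:ℝ) + 1 ≤ 2^m := by exact_mod_cast hj0lt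
      linarith
    exact ⟨by linarith [hy.1], by linarith [hy.2]⟩
  · intro y hy
    rw [Set.mem_Icc] at hy
    rw [Set.mem_Ico]
    exact ⟨by linarith [hy.1], by linarith [hy.2]⟩

/-- Growth bound for the ceiling exponent. -/
lemma beta_pow_ceil_ge (β ε : ℝ) (hβ1 : 1 < β) (m : ℕ) :
    (2:ℝ) ^ ((1 + ε) * (m:ℝ)) ≤ β ^ ⌈(1 + ε) * (m : ℝ) * Real.log 2 / Real.log β⌉₊ := by
  have hlogβ : 0 < Real.log β := Real.log_pos hβ1
  have hK : (1 + ε) * (m:ℝ) * Real.log 2 / Real.log β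
      ≤ (⌈(1 + ε) * (m : ℝ) * Real.log 2 / Real.log β⌉₊ : ℝ) := Nat.le_ceil _
  have h1 : (1 + ε) * (m:ℝ) * Real.log 2
      ≤ (⌈(1 + ε) * (m : ℝ) * Real.log 2 / Real.log β⌉₊ : ℝ) * Real.log β := by
    rw [div_le_iff₀ hlogβ] at hK; linarith
  calc (2:ℝ) ^ ((1 + ε) * (m:ℝ)) = Real.exp ((1 + ε) * (m:ℝ) * Real.log 2) := by
        rw [Real.rpow_def_of_pos two_pos, mul_comm]
    _ ≤ Real.exp ((⌈(1 + ε) * (m : ℝ) * Real.log 2 / Real.log β⌉₊ : ℝ) * Real.log β) :=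
        Real.exp_le_exp.mpr h1
    _ = β ^ ⌈(1 + ε) * (m : ℝ) * Real.log 2 / Real.log β⌉₊ := by
        rw [← Real.rpow_natCast β, Real.rpow_def_of_pos (by linarith), mul_comm]

lemma two_rpow_split (ε : ℝ) (m : ℕ) :
    (2:ℝ) ^ ((1 + ε) * (m:ℝ)) = 2 ^ m * ((2:ℝ) ^ ε) ^ m := by
  rw [show (1 + ε) * (m:ℝ) = (m:ℝ) + ε * m by ring, Real.rpow_add two_pos,
    Real.rpow_natCast]
  congr 1
  rw [← Real.rpow_natCast ((2:ℝ) ^ ε) m, ← Real.rpow_mul (by norm_num)]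

/-- with `k̄(m) = ⌈(1+ε)·m·log 2/log β⌉`, for Lebesgue-a.e. `x ∈ [0,1]`
there exists `M ∈ ℕ` such that for all `m ≥ M` one has `I_{k̄(m)}(u,x) ⊆ D_m(x)`;
in particular `k(m,u,x) ≤ k̄(m)` for all `m ≥ M`. -/
theorem stmt_7 (β : ℝ) (hβ : β ∈ Set.Ioo (1:ℝ) 2) (u : ℕ → ℝ)
    (hu : ∀ n, 1 ≤ n → u n ∈ Set.Icc (1:ℝ) (β - 1)⁻¹)
    (ε : ℝ) (hε : ε ∈ Set.Ioo (0:ℝ) 1) :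
    ∀ᵐ x ∂(volume.restrict (Set.Icc (0:ℝ) 1)),
      ∃ M : ℕ, ∀ m ≥ M,
        betaI β u x ⌈(1 + ε) * (m : ℝ) * Real.log 2 / Real.log β⌉₊ ⊆ dyadic m x ∧
        kval β u x m ≤ (⌈(1 + ε) * (m : ℝ) * Real.log 2 / Real.log β⌉₊ : ℕ∞) := by
  obtain ⟨hβ1, hβ2⟩ := hβ
  obtain ⟨hε0, hε1⟩ := hε
  have hb : (0:ℝ) < β - 1 := by linarith
  set c : ℝ := (β - 1)⁻¹ with hc
  have hc0 : 0 < c := by positivity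
  have hc1 : 1 ≤ c := by
    rw [hc]
    rw [le_inv_comm₀ one_pos hb]
    linarith
  set q : ℝ := ((2:ℝ) ^ (ε:ℝ))⁻¹ with hqdef
  have h2ε : 1 < (2:ℝ) ^ (ε:ℝ) := (Real.one_lt_rpow_iff_of_pos two_pos).2 (Or.inl ⟨one_lt_two, hε0⟩)
  have hq0 : 0 < q := by positivity
  have hq1 : q < 1 := by
    rw [hqdef, inv_lt_one_iff₀]; right; exact h2ε
  set r : ℕ → ℝ := fun m => c * ((2:ℝ)^m)⁻¹ * q^m with hrdef
  have hr0 : ∀ m, 0 < r m := fun m => by positivity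
  set B : ℕ → Set ℝ := fun m =>
    ⋃ j ∈ Finset.range (2^m+1), Set.Icc ((j:ℝ)/2^m - r m) ((j:ℝ)/2^m + r m) with hBdef
  -- measure bound
  have hmeas : ∀ m, volume (B m) ≤ ENNReal.ofReal (4*c) * (ENNReal.ofReal q)^m := by
    intro m
    have h1 : volume (B m) ≤ ∑ j ∈ Finset.range (2^m+1),
        volume (Set.Icc ((j:ℝ)/2^m - r m) ((j:ℝ)/2^m + r m)) :=
      measure_biUnion_finset_le _ _
    have h2 : ∀ j ∈ Finset.range (2^m+1),
        volume (Set.Icc ((j:ℝ)/2^m - r m) ((j:ℝ)/2^m + r m)) = ENNReal.ofReal (2 * r m) := by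
      intro j _
      rw [Real.volume_Icc]
      congr 1; ring
    rw [Finset.sum_congr rfl h2, Finset.sum_const, Finset.card_range, nsmul_eq_mul] at h1
    refine h1.trans ?_
    rw [← ENNReal.ofReal_natCast, ← ENNReal.ofReal_mul (by positivity),
      ← ENNReal.ofReal_pow hq0.le, ← ENNReal.ofReal_mul (by positivity)]
    apply ENNReal.ofReal_le_ofReal
    have hTm : (0:ℝ) < (2:ℝ)^m := by positivity
    have hcard : ((2^m+1 : ℕ):ℝ) ≤ 2 * (2:ℝ)^m := by
      push_cast
      nlinarith [one_le_pow₀ (by norm_num : (1:ℝ) ≤ 2) (n := m)]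
    have hrval : 2 * r m = 2 * c * ((2:ℝ)^m)⁻¹ * q^m := by rw [hrdef]; ring
    have : ((2^m+1 : ℕ):ℝ) * (2 * r m) ≤ 2 * (2:ℝ)^m * (2 * c * ((2:ℝ)^m)⁻¹ * q^m) := by
      rw [hrval]
      apply mul_le_mul_of_nonneg_right hcard (by positivity)
    refine this.trans (le_of_eq ?_)
    field_simp
    ring
  have htsum : ∑' m, volume (B m) ≠ ⊤ := by
    have hle : ∑' m, volume (B m)
        ≤ ∑' m, ENNReal.ofReal (4*c) * (ENNReal.ofReal q)^m :=
      ENNReal.tsum_le_tsum hmeas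
    rw [ENNReal.tsum_mul_left, ENNReal.tsum_geometric] at hle
    apply ne_top_of_le_ne_top _ hle
    apply ENNReal.mul_ne_top ENNReal.ofReal_ne_top
    rw [Ne, ENNReal.inv_eq_top]
    intro h
    have : ENNReal.ofReal q < 1 := ENNReal.ofReal_lt_one.2 hq1
    rw [tsub_eq_zero_iff_le] at h
    exact absurd h (not_le.2 this)
  have hae : ∀ᵐ x ∂(volume : Measure ℝ), ∀ᶠ m in atTop, x ∉ B m :=
    ae_eventually_notMem htsum
  filter_upwards [ae_restrict_of_ae hae, ae_restrict_mem measurableSet_Icc]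
    with x hx hxI
  obtain ⟨hx0, hx1⟩ := hxI
  obtain ⟨M, hM⟩ := eventually_atTop.1 hx
  refine ⟨max M 1, fun m hm => ?_⟩
  have hm1 : 1 ≤ m := le_trans (le_max_right M 1) hm
  have hmM : M ≤ m := le_trans (le_max_left M 1) hm
  set K : ℕ := ⌈(1 + ε) * (m : ℝ) * Real.log 2 / Real.log β⌉₊ with hKdef
  have hK1 : 1 ≤ K := by
    rw [hKdef]
    apply Nat.one_le_ceil_iff.2
    have hm0 : (0:ℝ) < m := by exact_mod_cast hm1
    have hlogβ : 0 < Real.log β := Real.log_pos hβ1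
    have hlog2 : 0 < Real.log 2 := Real.log_pos one_lt_two
    positivity
  -- L ≤ r m
  have hβK : (0:ℝ) < β ^ K := by positivity
  have hgrowth : (2:ℝ)^m * ((2:ℝ)^ε)^m ≤ β ^ K := by
    rw [← two_rpow_split]; exact beta_pow_ceil_ge β ε hβ1 m
  have hL : (β ^ K)⁻¹ * c ≤ r m := by
    have h2 : (0:ℝ) < (2:ℝ)^m * ((2:ℝ)^ε)^m := by positivity
    have hinv : (β ^ K)⁻¹ ≤ ((2:ℝ)^m * ((2:ℝ)^ε)^m)⁻¹ :=
      inv_anti₀ h2 hgrowth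
    have heq : ((2:ℝ)^m * ((2:ℝ)^ε)^m)⁻¹ = ((2:ℝ)^m)⁻¹ * q^m := by
      rw [mul_inv, hqdef, inv_pow]
    rw [hrdef]
    calc (β ^ K)⁻¹ * c ≤ ((2:ℝ)^m)⁻¹ * q^m * c := by
          rw [← heq]; exact mul_le_mul_of_nonneg_right hinv hc0.le
      _ = c * ((2:ℝ)^m)⁻¹ * q^m := by ring
  -- betaI ⊆ Icc (x - r m) (x + r m)
  have hxc : x ∈ Set.Icc (0:ℝ) c := ⟨hx0, le_trans hx1 hc1⟩
  have hiter := betaIter_mem β hβ1 u hu x hxc K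
  have hsum := betaSum_eq β (by linarith) u x K
  have hIsub : betaI β u x K ⊆ Set.Icc (x - r m) (x + r m) := by
    rw [betaI, hsum]
    apply Set.Icc_subset_Icc
    · have : betaIter β u x K / β ^ K ≤ (β^K)⁻¹ * c := by
        rw [div_eq_mul_inv, mul_comm]
        exact mul_le_mul_of_nonneg_left hiter.2 (by positivity)
      linarith [hL]
    · have h1 : 0 ≤ betaIter β u x K / β ^ K := div_nonneg hiter.1 hβK.le
      have h2 : (β ^ K)⁻¹ * c ≤ r m := hL
      linarith
  -- x ∉ B m gives the dyadic containment
  have hnot := hM m hmM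
  have hbad : ∀ j ∈ Finset.range (2^m+1),
      x ∉ Set.Icc ((j:ℝ)/2^m - r m) ((j:ℝ)/2^m + r m) := by
    intro j hj hmem
    exact hnot (Set.mem_biUnion hj hmem)
  have hdy := icc_subset_dyadic m x (r m) (hr0 m) hx0 hx1 hbad
  have hfinal : betaI β u x K ⊆ dyadic m x := hIsub.trans hdy
  refine ⟨hfinal, ?_⟩
  exact sInf_le ⟨K, rfl, hK1, hfinal⟩
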